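/- Let M be the real 20×13 matrix whose rows are: (60,−6,−3,0,0,0,0,0,0,0,0,0,0), (24,0,−3,0,0,−3,0,0,0,0,0,0,0), (0,0,0,0,0,−3,0,0,0,0,0,0,0), (0,6,0,−6,−3,−18,0,0,0,0,0,0,0), (0,0,12,−18,−6,−72,0,0,0,0,0,0,0), (0,0,0,0,−3,−21,0,0,0,0,0,0,0), (0,0,0,−6,−2,−18,0,0,0,0,0,0,0), (0,0,0,0,0,3,0,0,0,0,0,0,0), (0,0,0,0,0,54,12,−6,−3,0,0,0,0), (0,0,0,0,0,24,0,0,−3,0,0,0,0), (0,0,0,0,0,36,0,−6,−3,0,0,0,0), (0,0,0,0,3,−3,0,0,0,0,0,0,0), (0,0,0,0,6,−18,0,0,0,0,−6,0,0), (0,0,0,0,0,0,0,0,3,0,0,0,0), (0,0,0,0,0,0,0,0,6,−6,0,0,0), (0,0,0,6,−10,−18,0,0,0,0,0,0,−6), (0,6,−6,0,3,6,0,0,0,0,0,−6,0), (0,0,0,0,6,18,0,6,−9,0,6,0,0), (0,0,0,0,0,0,0,0,6,6,0,0,0), (0,−6,6,−3,3,3,0,0,0,0,0,6,3). Let v₁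 = (0,0,−14,0,0,2,0,0,0,0,0,0,0,0,0,3,6,0,0,6), v₂ = (0,0,32,0,0,0,0,0,0,4,0,0,0,0,1,0,0,0,1,0), v₃ = (0,0,−48,0,0,4,0,0,0,−4,1,0,1,0,0,0,0,1,0,0), v₄ = (0,0,8,0,0,0,0,0,0,1,0,0,0,1,0,0,0,0,0,0), v₅ = (0,0,−8,0,0,1,0,0,0,0,0,1,0,0,0,0,0,0,0,0), v₆ = (0,0,1,0,0,0,0,1,0,0,0,0,0,0,0,0,0,0,0,0), v₇ = (24,−60,170,24,−9,−8,3,0,0,0,0,0,0,0,0,0,0,0,0,0) in ℝ²⁰. Then: (i) vⱼᵀ M = 0 for each j = 1,…,7; (ii) v₁,…,v₇ are linearly independent; and (iii) {v ∈ ℝ²⁰ : vᵀ M = 0} = span{v₁,…,v₇}, equivalently the rank of M equals 13, so that the orthogonal complement of the column space of M in ℝ²⁰ is spanned by v₁,…,v₇. -/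
import Mathlib


/-- The 20×13 coefficient matrix `M` of the linear system determining the second
normal form generator `G₄` in the Hiraoka–Kodama normalisation on the torus. -/
noncomputable def Mmat : Matrix (Fin 20) (Fin 13) ℝ :=
  !![60, -6, -3, 0, 0, 0, 0, 0, 0, 0, 0, 0, 0;
     24, 0, -3, 0, 0, -3, 0, 0, 0, 0, 0, 0, 0;
     0, 0, 0, 0, 0, -3, 0, 0, 0, 0, 0, 0, 0;
     0, 6, 0, -6, -3, -18, 0, 0, 0, 0, 0, 0, 0;
     0, 0, 12, -18, -6, -72, 0, 0, 0, 0, 0, 0, 0;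
     0, 0, 0, 0, -3, -21, 0, 0, 0, 0, 0, 0, 0;
     0, 0, 0, -6, -2, -18, 0, 0, 0, 0, 0, 0, 0;
     0, 0, 0, 0, 0, 3, 0, 0, 0, 0, 0, 0, 0;
     0, 0, 0, 0, 0, 54, 12, -6, -3, 0, 0, 0, 0;
     0, 0, 0, 0, 0, 24, 0, 0, -3, 0, 0, 0, 0;
     0, 0, 0, 0, 0, 36, 0, -6, -3, 0, 0, 0, 0;
     0, 0, 0, 0, 3, -3, 0, 0, 0, 0, 0, 0, 0;
     0, 0, 0, 0, 6, -18, 0, 0, 0, 0, -6, 0, 0;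
     0, 0, 0, 0, 0, 0, 0, 0, 3, 0, 0, 0, 0;
     0, 0, 0, 0, 0, 0, 0, 0, 6, -6, 0, 0, 0;
     0, 0, 0, 6, -10, -18, 0, 0, 0, 0, 0, 0, -6;
     0, 6, -6, 0, 3, 6, 0, 0, 0, 0, 0, -6, 0;
     0, 0, 0, 0, 6, 18, 0, 6, -9, 0, 6, 0, 0;
     0, 0, 0, 0, 0, 0, 0, 0, 6, 6, 0, 0, 0;
     0, -6, 6, -3, 3, 3, 0, 0, 0, 0, 0, 6, 3]

/-- The seven vectors `v₁, …, v₇ ∈ ℝ²⁰` spanning the left kernel of `M`. -/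
noncomputable def vvec : Fin 7 → Fin 20 → ℝ :=
  ![![0, 0, -14, 0, 0, 2, 0, 0, 0, 0, 0, 0, 0, 0, 0, 3, 6, 0, 0, 6],
    ![0, 0, 32, 0, 0, 0, 0, 0, 0, 4, 0, 0, 0, 0, 1, 0, 0, 0, 1, 0],
    ![0, 0, -48, 0, 0, 4, 0, 0, 0, -4, 1, 0, 1, 0, 0, 0, 0, 1, 0, 0],
    ![0, 0, 8, 0, 0, 0, 0, 0, 0, 1, 0, 0, 0, 1, 0, 0, 0, 0, 0, 0],
    ![0, 0, -8, 0, 0, 1, 0, 0, 0, 0, 0, 1, 0, 0, 0, 0, 0, 0, 0, 0],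
    ![0, 0, 1, 0, 0, 0, 0, 1, 0, 0, 0, 0, 0, 0, 0, 0, 0, 0, 0, 0],
    ![24, -60, 170, 24, -9, -8, 3, 0, 0, 0, 0, 0, 0, 0, 0, 0, 0, 0, 0, 0]]

theorem fin_succ_ofNat {n i : ℕ} [NeZero n] (h : i < n) :
    Fin.succ (OfNat.ofNat i : Fin n) = (OfNat.ofNat (i+1) : Fin (n+1)) := by
  apply Fin.ext
  show (i % n) + 1 = (i+1) % (n+1)
  rw [Nat.mod_eq_of_lt h, Nat.mod_eq_of_lt (by omega)]

theorem cv2 {α : Type*} {m : ℕ} (x : α) (u : Fin (m+2) → α) :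
    Matrix.vecCons x u (2 : Fin (m+3)) = u 1 := by
  rw [show (2 : Fin (m+3)) = Fin.succ (1 : Fin (m+2)) from
    (fin_succ_ofNat (by omega)).symm, Matrix.cons_val_succ]
theorem cv3 {α : Type*} {m : ℕ} (x : α) (u : Fin (m+3) → α) :
    Matrix.vecCons x u (3 : Fin (m+4)) = u 2 := by
  rw [show (3 : Fin (m+4)) = Fin.succ (2 : Fin (m+3)) from
    (fin_succ_ofNat (by omega)).symm, Matrix.cons_val_succ]
theorem cv4 {α : Type*} {m : ℕ} (x : α) (u : Fin (m+4) → α) :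
    Matrix.vecCons x u (4 : Fin (m+5)) = u 3 := by
  rw [show (4 : Fin (m+5)) = Fin.succ (3 : Fin (m+4)) from
    (fin_succ_ofNat (by omega)).symm, Matrix.cons_val_succ]
theorem cv5 {α : Type*} {m : ℕ} (x : α) (u : Fin (m+5) → α) :
    Matrix.vecCons x u (5 : Fin (m+6)) = u 4 := by
  rw [show (5 : Fin (m+6)) = Fin.succ (4 : Fin (m+5)) from
    (fin_succ_ofNat (by omega)).symm, Matrix.cons_val_succ]
theorem cv6 {α : Type*} {m : ℕ} (x : α) (u : Fin (m+6) → α) :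
    Matrix.vecCons x u (6 : Fin (m+7)) = u 5 := by
  rw [show (6 : Fin (m+7)) = Fin.succ (5 : Fin (m+6)) from
    (fin_succ_ofNat (by omega)).symm, Matrix.cons_val_succ]
theorem cv7 {α : Type*} {m : ℕ} (x : α) (u : Fin (m+7) → α) :
    Matrix.vecCons x u (7 : Fin (m+8)) = u 6 := by
  rw [show (7 : Fin (m+8)) = Fin.succ (6 : Fin (m+7)) from
    (fin_succ_ofNat (by omega)).symm, Matrix.cons_val_succ]
theorem cv8 {α : Type*} {m : ℕ} (x : α) (u : Fin (m+8) → α) :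
    Matrix.vecCons x u (8 : Fin (m+9)) = u 7 := by
  rw [show (8 : Fin (m+9)) = Fin.succ (7 : Fin (m+8)) from
    (fin_succ_ofNat (by omega)).symm, Matrix.cons_val_succ]
theorem cv9 {α : Type*} {m : ℕ} (x : α) (u : Fin (m+9) → α) :
    Matrix.vecCons x u (9 : Fin (m+10)) = u 8 := by
  rw [show (9 : Fin (m+10)) = Fin.succ (8 : Fin (m+9)) from
    (fin_succ_ofNat (by omega)).symm, Matrix.cons_val_succ]
theorem cv10 {α : Type*} {m : ℕ} (x : α) (u : Fin (m+10) → α) :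
    Matrix.vecCons x u (10 : Fin (m+11)) = u 9 := by
  rw [show (10 : Fin (m+11)) = Fin.succ (9 : Fin (m+10)) from
    (fin_succ_ofNat (by omega)).symm, Matrix.cons_val_succ]
theorem cv11 {α : Type*} {m : ℕ} (x : α) (u : Fin (m+11) → α) :
    Matrix.vecCons x u (11 : Fin (m+12)) = u 10 := by
  rw [show (11 : Fin (m+12)) = Fin.succ (10 : Fin (m+11)) from
    (fin_succ_ofNat (by omega)).symm, Matrix.cons_val_succ]
theorem cv12 {α : Type*} {m : ℕ} (x : α) (u : Fin (m+12) → α) :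
    Matrix.vecCons x u (12 : Fin (m+13)) = u 11 := by
  rw [show (12 : Fin (m+13)) = Fin.succ (11 : Fin (m+12)) from
    (fin_succ_ofNat (by omega)).symm, Matrix.cons_val_succ]
theorem cv13 {α : Type*} {m : ℕ} (x : α) (u : Fin (m+13) → α) :
    Matrix.vecCons x u (13 : Fin (m+14)) = u 12 := by
  rw [show (13 : Fin (m+14)) = Fin.succ (12 : Fin (m+13)) from
    (fin_succ_ofNat (by omega)).symm, Matrix.cons_val_succ]
theorem cv14 {α : Type*} {m : ℕ} (x : α) (u : Fin (m+14) → α) :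
    Matrix.vecCons x u (14 : Fin (m+15)) = u 13 := by
  rw [show (14 : Fin (m+15)) = Fin.succ (13 : Fin (m+14)) from
    (fin_succ_ofNat (by omega)).symm, Matrix.cons_val_succ]
theorem cv15 {α : Type*} {m : ℕ} (x : α) (u : Fin (m+15) → α) :
    Matrix.vecCons x u (15 : Fin (m+16)) = u 14 := by
  rw [show (15 : Fin (m+16)) = Fin.succ (14 : Fin (m+15)) from
    (fin_succ_ofNat (by omega)).symm, Matrix.cons_val_succ]
theorem cv16 {α : Type*} {m : ℕ} (x : α) (u : Fin (m+16) → α) :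
    Matrix.vecCons x u (16 : Fin (m+17)) = u 15 := by
  rw [show (16 : Fin (m+17)) = Fin.succ (15 : Fin (m+16)) from
    (fin_succ_ofNat (by omega)).symm, Matrix.cons_val_succ]
theorem cv17 {α : Type*} {m : ℕ} (x : α) (u : Fin (m+17) → α) :
    Matrix.vecCons x u (17 : Fin (m+18)) = u 16 := by
  rw [show (17 : Fin (m+18)) = Fin.succ (16 : Fin (m+17)) from
    (fin_succ_ofNat (by omega)).symm, Matrix.cons_val_succ]
theorem cv18 {α : Type*} {m : ℕ} (x : α) (u : Fin (m+18) → α) :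
    Matrix.vecCons x u (18 : Fin (m+19)) = u 17 := by
  rw [show (18 : Fin (m+19)) = Fin.succ (17 : Fin (m+18)) from
    (fin_succ_ofNat (by omega)).symm, Matrix.cons_val_succ]
theorem cv19 {α : Type*} {m : ℕ} (x : α) (u : Fin (m+19) → α) :
    Matrix.vecCons x u (19 : Fin (m+20)) = u 18 := by
  rw [show (19 : Fin (m+20)) = Fin.succ (18 : Fin (m+19)) from
    (fin_succ_ofNat (by omega)).symm, Matrix.cons_val_succ]


set_option maxHeartbeats 4000000 in
theorem hkerAux : ∀ j : Fin 7, Matrix.vecMul (vvec j) Mmat = 0 := by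
  intro j
  funext k
  fin_cases j <;> fin_cases k <;>
    norm_num [Mmat, vvec, Matrix.vecMul, dotProduct, Finset.sum_fin_eq_sum_range, Finset.sum_range_succ, cv2, cv3, cv4, cv5, cv6, cv7, cv8, cv9, cv10, cv11, cv12, cv13, cv14, cv15, cv16, cv17, cv18, cv19]

set_option maxHeartbeats 4000000 in
set_option maxRecDepth 40000 in
theorem hcomb (v : Fin 20 → ℝ) (hv : Matrix.vecMul v Mmat = 0) :
    v = (v 15/3) • vvec 0 + (v 14) • vvec 1 + (v 10) • vvec 2 + (v 13) • vvec 3 +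
        (v 11) • vvec 4 + (v 7) • vvec 5 + (v 6/3) • vvec 6 := by
  have e0 := congrFun hv 0
  have e1 := congrFun hv 1
  have e2 := congrFun hv 2
  have e3 := congrFun hv 3
  have e4 := congrFun hv 4
  have e5 := congrFun hv 5
  have e6 := congrFun hv 6
  have e7 := congrFun hv 7
  have e8 := congrFun hv 8
  have e9 := congrFun hv 9
  have e10 := congrFun hv 10
  have e11 := congrFun hv 11
  have e12 := congrFun hv 12
  norm_num [Mmat, Matrix.vecMul, dotProduct,
    Finset.sum_fin_eq_sum_range, Finset.sum_range_succ, cv2, cv3, cv4, cv5, cv6, cv7, cv8, cv9, cv10, cv11, cv12, cv13, cv14, cv15, cv16, cv17, cv18, cv19] at e0 e1 e2 e3 e4 e5 e6 e7 e8 e9 e10 e11 e12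
  simp only [Fin.reduceFinMk] at e0 e1 e2 e3 e4 e5 e6 e7 e8 e9 e10 e11 e12
  funext i
  fin_cases i <;> simp only [Fin.reduceFinMk] <;>
    norm_num [vvec, cv2, cv3, cv4, cv5, cv6, cv7, cv8, cv9, cv10, cv11, cv12, cv13, cv14, cv15, cv16, cv17, cv18, cv19] <;> linarith

set_option maxHeartbeats 4000000 in
set_option maxRecDepth 40000 in
theorem hli : LinearIndependent ℝ vvec := by
  rw [Fintype.linearIndependent_iff]
  intro g hg
  have h6 := congrFun hg 6
  have h7 := congrFun hg 7
  have h10 := congrFun hg 10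
  have h11 := congrFun hg 11
  have h13 := congrFun hg 13
  have h14 := congrFun hg 14
  have h15 := congrFun hg 15
  norm_num [vvec, Finset.sum_apply, Pi.smul_apply,
    Finset.sum_fin_eq_sum_range, Finset.sum_range_succ, cv2, cv3, cv4, cv5, cv6, cv7, cv8, cv9, cv10, cv11, cv12, cv13, cv14, cv15, cv16, cv17, cv18, cv19] at h6 h7 h10 h11 h13 h14 h15
  simp only [Fin.reduceFinMk] at h6 h7 h10 h11 h13 h14 h15
  intro i
  fin_cases i <;> simp only [Fin.reduceFinMk] <;> linarith

/-- (i) Each `vⱼ` satisfies `vⱼᵀM = 0`; (ii) `v₁, …, v₇` are linearly independent;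
(iii) the left kernel of `M` equals their span, equivalently `rank M = 13`, so the
orthogonal complement of the column space of `M` in `ℝ²⁰` is spanned by `v₁, …, v₇`. -/
theorem stmt_18 :
    (∀ j : Fin 7, Matrix.vecMul (vvec j) Mmat = 0) ∧
    LinearIndependent ℝ vvec ∧
    (∀ v : Fin 20 → ℝ,
      Matrix.vecMul v Mmat = 0 ↔ v ∈ Submodule.span ℝ (Set.range vvec)) ∧
    Mmat.rank = 13 := by
  have hspan : ∀ v : Fin 20 → ℝ,
      Matrix.vecMul v Mmat = 0 ↔ v ∈ Submodule.span ℝ (Set.range vvec) := by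
    intro v
    constructor
    · intro hv
      rw [hcomb v hv]
      have mem : ∀ j : Fin 7, vvec j ∈ Submodule.span ℝ (Set.range vvec) :=
        fun j => Submodule.subset_span ⟨j, rfl⟩
      exact Submodule.add_mem _ (Submodule.add_mem _ (Submodule.add_mem _
        (Submodule.add_mem _ (Submodule.add_mem _ (Submodule.add_mem _
          (Submodule.smul_mem _ _ (mem 0)) (Submodule.smul_mem _ _ (mem 1)))
          (Submodule.smul_mem _ _ (mem 2))) (Submodule.smul_mem _ _ (mem 3)))
          (Submodule.smul_mem _ _ (mem 4))) (Submodule.smul_mem _ _ (mem 5)))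
        (Submodule.smul_mem _ _ (mem 6))
    · intro hv
      have hle : Submodule.span ℝ (Set.range vvec) ≤
          LinearMap.ker (Matrix.vecMulLinear Mmat) := by
        rw [Submodule.span_le]
        rintro _ ⟨j, rfl⟩
        simp only [SetLike.mem_coe, LinearMap.mem_ker, Matrix.vecMulLinear_apply]
        exact hkerAux j
      have := hle hv
      simpa only [LinearMap.mem_ker, Matrix.vecMulLinear_apply] using this
  refine ⟨hkerAux, hli, hspan, ?_⟩
  have hkerEq : LinearMap.ker (Matrix.mulVecLin (Matrix.transpose Mmat)) =
      Submodule.span ℝ (Set.range vvec) := by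
    ext v
    rw [LinearMap.mem_ker, Matrix.mulVecLin_apply, Matrix.mulVec_transpose]
    exact hspan v
  have hfk : Module.finrank ℝ (LinearMap.ker (Matrix.mulVecLin (Matrix.transpose Mmat))) = 7 := by
    rw [hkerEq, finrank_span_eq_card hli]
    simp
  have hrn := LinearMap.finrank_range_add_finrank_ker (Matrix.mulVecLin (Matrix.transpose Mmat))
  rw [hfk] at hrn
  have hdim : Module.finrank ℝ (Fin 20 → ℝ) = 20 := by simp
  rw [hdim] at hrn
  have hT : (Matrix.transpose Mmat).rank = 13 := by
    rw [Matrix.rank]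
    omega
  rw [← Matrix.rank_transpose]
  exact hT
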